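/- For every x > 0, ∫₀^∞ ζ^{−1/2} sin²(a ζ^{1/2}) / (ζ + x) dζ = (π/(2√x)) (1 − e^{−2a√x}), for any a > 0. -/

import Mathlib

open MeasureTheory Set Real

lemma gauss_cos (u b : ℝ) (hu : 0 < u) :
    ∫ t : ℝ, Real.cos (b * t) * Real.exp (-u * t ^ 2)
      = Real.sqrt (π / u) * Real.exp (-b ^ 2 / (4 * u)) := by
  have h := fourierIntegral_gaussian (b := (u : ℂ)) (by simpa using hu) (b : ℂ)
  have hint : Integrable (fun t : ℝ => Complex.exp (Complex.I * b * t) *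
      Complex.exp (-(u : ℂ) * t ^ 2)) := by
    have := integrable_cexp_quadratic (b := (u : ℂ)) (by simpa using hu) (Complex.I * b) 0
    refine this.congr ?_
    filter_upwards with t
    rw [← Complex.exp_add]
    ring_nf
  have hre := congrArg Complex.re h
  rw [← RCLike.re_eq_complex_re, ← integral_re hint] at hre
  simp only [RCLike.re_eq_complex_re] at hre
  calc ∫ t : ℝ, Real.cos (b * t) * Real.exp (-u * t ^ 2)
      = ∫ t : ℝ, (Complex.exp (Complex.I * b * t) * Complex.exp (-(u : ℂ) * t ^ 2)).re := by
        refine integral_congr_ae ?_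
        filter_upwards with t
        rw [show Complex.I * (b:ℂ) * (t:ℂ) = ((b*t : ℝ):ℂ) * Complex.I by push_cast; ring,
          Complex.exp_mul_I, show -(u:ℂ) * (t:ℂ)^2 = ((-u * t^2 : ℝ):ℂ) by push_cast; ring,
          ← Complex.ofReal_exp]
        simp only [Complex.add_re, Complex.add_im, Complex.mul_re, Complex.mul_im,
          Complex.I_re, Complex.I_im, Complex.ofReal_re, Complex.ofReal_im,
          Complex.cos_ofReal_re, Complex.cos_ofReal_im, Complex.sin_ofReal_re,
          Complex.sin_ofReal_im]
        ring
    _ = ((↑π / ↑u) ^ (1/2 : ℂ) * Complex.exp (-(b:ℂ) ^ 2 / (4 * (u:ℂ)))).re := hre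
    _ = Real.sqrt (π / u) * Real.exp (-b ^ 2 / (4 * u)) := by
        rw [show ((π:ℂ)/(u:ℂ)) = ((π/u : ℝ):ℂ) by push_cast; ring,
          show ((1:ℂ)/2) = ((1/2:ℝ):ℂ) by norm_num,
          ← Complex.ofReal_cpow (by positivity),
          show -(b:ℂ)^2/(4*(u:ℂ)) = ((-b^2/(4*u) : ℝ):ℂ) by push_cast; ring,
          ← Complex.ofReal_exp, ← Complex.ofReal_mul]
        rw [Complex.ofReal_re, Real.sqrt_eq_rpow]

lemma glasser (p c : ℝ) (hp : 0 < p) (hc : 0 < c) :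
    ∫ s in Ioi (0:ℝ), Real.exp (-(p * s - c / s) ^ 2) = Real.sqrt π / (2 * p) := by
  set g : ℝ → ℝ := fun s => p * s - c / s with hg
  have hderiv : ∀ s ∈ Ioi (0:ℝ), HasDerivWithinAt g (p + c / s ^ 2) (Ioi 0) s := by
    intro s hs
    have hs0 : s ≠ 0 := ne_of_gt hs
    have : HasDerivAt g (p - (-c / s ^ 2)) s := by
      have h1 : HasDerivAt (fun s : ℝ => p * s) p s := by
        simpa using (hasDerivAt_id s).const_mul p
      have h2 : HasDerivAt (fun s : ℝ => c / s) (-c / s ^ 2) s := by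
        simpa [div_eq_mul_inv, neg_div, mul_comm] using ((hasDerivAt_id s).inv hs0).const_mul c
      exact h1.sub h2
    have h3 : p - (-c / s ^ 2) = p + c / s ^ 2 := by ring
    exact (h3 ▸ this).hasDerivWithinAt
  have hmono : StrictMonoOn g (Ioi 0) := by
    intro s hs t ht hst
    have hs0 : (0:ℝ) < s := hs
    have ht0 : (0:ℝ) < t := ht
    simp only [hg]
    have h4 : c / t < c / s := div_lt_div_of_pos_left hc hs0 hst
    nlinarith
  have hinj : InjOn g (Ioi 0) := hmono.injOn
  have himage : g '' Ioi 0 = univ := by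
    apply eq_univ_of_forall
    intro y
    set R := Real.sqrt (y ^ 2 + 4 * p * c) with hR
    have hRpos : |y| < R := by
      rw [hR, ← Real.sqrt_sq_eq_abs]
      exact Real.sqrt_lt_sqrt (sq_nonneg y) (by nlinarith)
    have hRsq : R ^ 2 = y ^ 2 + 4 * p * c := Real.sq_sqrt (by nlinarith [sq_nonneg y])
    set s := (y + R) / (2 * p) with hs
    have hspos : 0 < s := by
      apply div_pos _ (by linarith)
      have := neg_abs_le y
      linarith [hRpos]
    refine ⟨s, hspos, ?_⟩
    have hs0 : s ≠ 0 := ne_of_gt hspos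
    have key : p * s ^ 2 - y * s - c = 0 := by
      rw [hs]
      have h2p : (2 * p) ≠ 0 := by positivity
      field_simp
      nlinarith [hRsq]
    simp only [hg]
    field_simp
    nlinarith [key]
  have hsub : ∫ v : ℝ, Real.exp (-v ^ 2)
      = ∫ s in Ioi (0:ℝ), |p + c / s ^ 2| • Real.exp (-(g s) ^ 2) := by
    rw [← integral_image_eq_integral_abs_deriv_smul measurableSet_Ioi hderiv hinj
      (fun v => Real.exp (-v ^ 2)), himage, Measure.restrict_univ]
  have habs : ∀ s ∈ Ioi (0:ℝ), |p + c / s ^ 2| • Real.exp (-(g s) ^ 2)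
      = (p + c / s ^ 2) * Real.exp (-(g s) ^ 2) := by
    intro s hs
    have h0 : (0:ℝ) < s := hs
    rw [smul_eq_mul, abs_of_pos (by positivity)]
  have hexp : Integrable (fun v : ℝ => Real.exp (-v ^ 2)) := by
    refine (integrable_exp_neg_mul_sq (show (0:ℝ) < 1 by norm_num)).congr ?_
    filter_upwards with v; rw [neg_one_mul]
  have hint0 : IntegrableOn (fun s => |p + c / s ^ 2| • Real.exp (-(g s) ^ 2)) (Ioi 0) := by
    have := integrableOn_image_iff_integrableOn_abs_deriv_smul measurableSet_Ioi hderiv hinj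
      (fun v => Real.exp (-v ^ 2))
    rw [himage] at this
    exact this.mp (by simpa [IntegrableOn] using hexp)
  have hint0' : IntegrableOn (fun s => (p + c / s ^ 2) * Real.exp (-(g s) ^ 2)) (Ioi 0) :=
    hint0.congr_fun habs measurableSet_Ioi
  have hcontg : ContinuousOn g (Ioi 0) :=
    (continuousOn_const.mul continuousOn_id).sub
      (continuousOn_const.div continuousOn_id (fun s hs => ne_of_gt hs))
  have hcont : ContinuousOn (fun s : ℝ => Real.exp (-(g s) ^ 2)) (Ioi 0) :=
    Real.continuous_exp.comp_continuousOn ((hcontg.pow 2).neg)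
  have hbound : ∀ s q : ℝ, 0 ≤ q → q ≤ p⁻¹ * (p + c / s ^ 2) →
      q * Real.exp (-(g s) ^ 2) ≤ p⁻¹ * ((p + c / s ^ 2) * Real.exp (-(g s) ^ 2)) := by
    intro s q _ hq2
    rw [← mul_assoc]
    exact mul_le_mul_of_nonneg_right hq2 (Real.exp_pos _).le
  have hdom : IntegrableOn (fun s => p⁻¹ * ((p + c / s ^ 2) * Real.exp (-(g s) ^ 2))) (Ioi 0) :=
    hint0'.const_mul _
  have hone : ∀ s : ℝ, (1:ℝ) ≤ p⁻¹ * (p + c / s ^ 2) := by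
    intro s
    have h1 : (0:ℝ) ≤ c / s ^ 2 := div_nonneg hc.le (sq_nonneg s)
    rw [inv_mul_eq_div, le_div_iff₀ hp]
    linarith
  have hintf : IntegrableOn (fun s => Real.exp (-(g s) ^ 2)) (Ioi 0) := by
    refine hdom.mono' (hcont.aestronglyMeasurable measurableSet_Ioi) ?_
    filter_upwards with s
    rw [Real.norm_eq_abs, abs_of_nonneg (Real.exp_pos _).le]
    simpa using hbound s 1 zero_le_one (hone s)
  -- the reflection s ↦ c/(p s)
  have hrefl : ∫ s in Ioi (0:ℝ), Real.exp (-(g s) ^ 2)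
      = ∫ s in Ioi (0:ℝ), (c / (p * s ^ 2)) * Real.exp (-(g s) ^ 2) := by
    set h : ℝ → ℝ := fun s => c / (p * s) with hh
    have hhderiv : ∀ s ∈ Ioi (0:ℝ), HasDerivWithinAt h (-(c / p) / s ^ 2) (Ioi 0) s := by
      intro s hs
      have hs0 : s ≠ 0 := ne_of_gt hs
      have h2 : HasDerivAt (fun s : ℝ => (c / p) / s) (-(c / p) / s ^ 2) s := by
        simpa [div_eq_mul_inv, neg_div, mul_comm] using
          ((hasDerivAt_id s).inv hs0).const_mul (c / p)
      refine (h2.congr_of_eventuallyEq ?_).hasDerivWithinAt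
      filter_upwards with t
      show c / (p * t) = c / p / t
      rw [div_div]
    have hhinj : InjOn h (Ioi 0) := by
      intro s hs t ht hst
      have hs0 : (0:ℝ) < s := hs
      have ht0 : (0:ℝ) < t := ht
      simp only [hh] at hst
      rw [div_eq_div_iff (by positivity) (by positivity)] at hst
      exact (mul_left_cancel₀ hp.ne' (mul_left_cancel₀ hc.ne' hst)).symm
    have hhim : h '' Ioi 0 = Ioi 0 := by
      ext y
      simp only [mem_image, mem_Ioi]
      constructor
      · rintro ⟨s, hs, rfl⟩
        exact div_pos hc (by positivity)
      · intro hy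
        refine ⟨c / (p * y), div_pos hc (by positivity), ?_⟩
        rw [hh]
        field_simp
    have := integral_image_eq_integral_abs_deriv_smul measurableSet_Ioi hhderiv hhinj
      (fun s => Real.exp (-(g s) ^ 2))
    rw [hhim] at this
    rw [this]
    refine setIntegral_congr_fun measurableSet_Ioi (fun s hs => ?_)
    have hs0 : (0:ℝ) < s := hs
    have harg : g (h s) = -(g s) := by
      simp only [hg, hh]
      field_simp
      ring
    rw [harg, neg_sq, smul_eq_mul]
    congr 1
    rw [abs_div, abs_neg, abs_of_nonneg (by positivity : (0:ℝ) ≤ c/p),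
      abs_of_nonneg (sq_nonneg s), div_div]
  have hintg2 : IntegrableOn (fun s => (c / (p * s ^ 2)) * Real.exp (-(g s) ^ 2)) (Ioi 0) := by
    refine hdom.mono' ?_ ?_
    · refine ContinuousOn.aestronglyMeasurable ?_ measurableSet_Ioi
      exact (continuousOn_const.div
        (continuousOn_const.mul (continuousOn_id.pow 2))
        (fun s hs => by have : (0:ℝ) < s := hs; exact (mul_pos hp (pow_pos this 2)).ne')).mul hcont
    · filter_upwards with s
      rw [Real.norm_eq_abs, abs_of_nonneg (by positivity)]
      refine hbound s _ (by positivity) ?_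
      have heq : c / (p * s ^ 2) = p⁻¹ * (c / s ^ 2) := by
        rw [← div_div, div_eq_mul_inv c p, mul_comm c p⁻¹, mul_div_assoc]
      rw [heq]
      have hle : c / s ^ 2 ≤ p + c / s ^ 2 := by linarith
      exact mul_le_mul_of_nonneg_left hle (inv_nonneg.2 hp.le)
  -- assembly
  have hgauss : ∫ v : ℝ, Real.exp (-v ^ 2) = Real.sqrt π := by
    have := integral_gaussian (1:ℝ)
    simpa [neg_one_mul] using this
  have hsplit : ∫ s in Ioi (0:ℝ), (p + c / s ^ 2) * Real.exp (-(g s) ^ 2)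
      = p * ((∫ s in Ioi (0:ℝ), Real.exp (-(g s) ^ 2))
          + ∫ s in Ioi (0:ℝ), (c / (p * s ^ 2)) * Real.exp (-(g s) ^ 2)) := by
    rw [← integral_add hintf hintg2, ← integral_const_mul]
    refine setIntegral_congr_fun measurableSet_Ioi (fun s hs => ?_)
    have hs0 : (0:ℝ) < s := hs
    field_simp
  have hfinal : Real.sqrt π = 2 * p * ∫ s in Ioi (0:ℝ), Real.exp (-(g s) ^ 2) := by
    rw [← hgauss, hsub, integral_congr_ae
      ((ae_restrict_iff' measurableSet_Ioi).2 (Filter.Eventually.of_forall habs)), hsplit, ← hrefl]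
    ring
  rw [show (fun s : ℝ => Real.exp (-(p * s - c / s) ^ 2)) = fun s => Real.exp (-(g s)^2) from rfl]
  rw [eq_div_iff (by positivity : (2:ℝ) * p ≠ 0)]
  linarith [hfinal]


lemma bessel (x a : ℝ) (hx : 0 < x) (ha : 0 < a) :
    ∫ u in Ioi (0:ℝ), u ^ (-(1:ℝ)/2) * Real.exp (-x * u - a ^ 2 / u)
      = Real.sqrt (π / x) * Real.exp (-2 * a * Real.sqrt x) := by
  have hsub := integral_comp_rpow_Ioi_of_pos
    (g := fun u : ℝ => u ^ (-(1:ℝ)/2) * Real.exp (-x * u - a ^ 2 / u)) (p := 2) (by norm_num)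
  rw [← hsub]
  have : ∀ s ∈ Ioi (0:ℝ), (2 * s ^ ((2:ℝ) - 1)) • ((s ^ (2:ℝ)) ^ (-(1:ℝ)/2)
        * Real.exp (-x * s ^ (2:ℝ) - a ^ 2 / s ^ (2:ℝ)))
      = 2 * Real.exp (-2 * a * Real.sqrt x) * Real.exp (-(Real.sqrt x * s - a / s) ^ 2) := by
    intro s hs
    have hs0 : (0:ℝ) < s := hs
    have h2 : s ^ ((2:ℝ)) = s ^ 2 := by
      rw [show ((2:ℝ)) = ((2:ℕ):ℝ) by norm_num, Real.rpow_natCast]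
    have h1 : s ^ ((2:ℝ) - 1) = s := by
      norm_num
    have h3 : ((s ^ 2 : ℝ)) ^ (-(1:ℝ)/2) = s⁻¹ := by
      rw [← Real.rpow_natCast s 2, ← Real.rpow_mul hs0.le]
      norm_num
      exact Real.rpow_neg_one s
    have hxs : Real.sqrt x ^ 2 = x := Real.sq_sqrt hx.le
    have harg : -x * s ^ 2 - a ^ 2 / s ^ 2
        = -2 * a * Real.sqrt x + -(Real.sqrt x * s - a / s) ^ 2 := by
      have hsx : (0:ℝ) < Real.sqrt x := Real.sqrt_pos.2 hx
      field_simp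
      linear_combination (s^2*s^2) * hxs
    rw [h2, h1, h3, harg, Real.exp_add, smul_eq_mul]
    field_simp
  rw [setIntegral_congr_fun measurableSet_Ioi this, integral_const_mul,
    glasser (Real.sqrt x) a (Real.sqrt_pos.2 hx) ha]
  rw [Real.sqrt_div pi_pos.le]
  have hsx : Real.sqrt x ≠ 0 := (Real.sqrt_pos.2 hx).ne'
  field_simp



lemma gauss_cos_Ioi (u b : ℝ) (hu : 0 < u) :
    ∫ t in Ioi (0:ℝ), Real.cos (b * t) * Real.exp (-u * t ^ 2)
      = Real.sqrt (π / u) / 2 * Real.exp (-b ^ 2 / (4 * u)) := by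
  have heq : ∀ t : ℝ, Real.cos (b * |t|) * Real.exp (-u * |t| ^ 2)
      = Real.cos (b * t) * Real.exp (-u * t ^ 2) := by
    intro t
    rcases abs_choice t with h' | h' <;> rw [h']
    rw [mul_neg, Real.cos_neg, neg_sq]
  have h := integral_comp_abs (f := fun t => Real.cos (b * t) * Real.exp (-u * t ^ 2))
  rw [integral_congr_ae (Filter.Eventually.of_forall heq), gauss_cos u b hu] at h
  linarith [h]

lemma exp_inner (c : ℝ) (hc : 0 < c) :
    ∫ u in Ioi (0:ℝ), Real.exp (-(c * u)) = c⁻¹ := by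
  have h := integral_comp_mul_left_Ioi (fun v => Real.exp (-v)) 0 hc
  rw [mul_zero] at h
  rw [show (fun u : ℝ => Real.exp (-(c * u))) = fun u => Real.exp (-(c * u)) from rfl]
  calc ∫ u in Ioi (0:ℝ), Real.exp (-(c * u)) = c⁻¹ • ∫ v in Ioi (0:ℝ), Real.exp (-v) := h
    _ = c⁻¹ := by rw [integral_exp_neg_Ioi, neg_zero, Real.exp_zero, smul_eq_mul, mul_one]

lemma integrable_rpow_exp (x : ℝ) (hx : 0 < x) :
    IntegrableOn (fun u : ℝ => u ^ (-(1:ℝ)/2) * Real.exp (-x * u)) (Ioi 0) := by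
  have h0 : IntegrableOn (fun v : ℝ => Real.exp (-v) * v ^ ((1:ℝ)/2 - 1)) (Ioi 0) :=
    Real.GammaIntegral_convergent one_half_pos
  have h1 : IntegrableOn (fun u : ℝ => Real.exp (-(x * u)) * (x * u) ^ ((1:ℝ)/2 - 1)) (Ioi 0) := by
    have := (integrableOn_Ioi_comp_mul_left_iff
      (fun v : ℝ => Real.exp (-v) * v ^ ((1:ℝ)/2 - 1)) 0 hx).2
    rw [mul_zero] at this
    exact this h0
  have h2 : IntegrableOn (fun u : ℝ => x ^ ((1:ℝ)/2) * (Real.exp (-(x * u)) * (x * u) ^ ((1:ℝ)/2 - 1))) (Ioi 0) := h1.const_mul _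
  refine h2.congr_fun (fun u hu => ?_) measurableSet_Ioi
  have hu0 : (0:ℝ) < u := hu
  beta_reduce
  rw [Real.mul_rpow hx.le hu0.le]
  rw [show ((1:ℝ)/2 - 1) = -(1/2 : ℝ) by norm_num]
  rw [show -(x * u) = -x * u by ring, show (-(1:ℝ)/2) = -(1/2:ℝ) by norm_num,
    show (-(1/2:ℝ)) = -(1/2:ℝ) from rfl]
  have hxx : x ^ ((1:ℝ)/2) * x ^ (-(1/2:ℝ)) = 1 := by
    rw [← Real.rpow_add hx]; norm_num
  linear_combination (rexp (-x*u) * u ^ (-(1/2:ℝ))) * hxx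

lemma laplace_cos (x b : ℝ) (hx : 0 < x) (hb : 0 < b) :
    ∫ t in Ioi (0:ℝ), Real.cos (b * t) / (t ^ 2 + x)
      = π / (2 * Real.sqrt x) * Real.exp (-b * Real.sqrt x) := by
  set μ := volume.restrict (Ioi (0:ℝ)) with hμ
  set F : ℝ × ℝ → ℝ := fun z => Real.cos (b * z.2) * Real.exp (-((z.2 ^ 2 + x) * z.1)) with hF
  have hx2 : ∀ t : ℝ, (0:ℝ) < t ^ 2 + x := fun t => by positivity
  have hFbound : ∀ u t : ℝ, ‖F (u, t)‖ ≤ Real.exp (-(x*u)) * Real.exp (-u * t ^ 2) := by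
    intro u t
    simp only [hF]
    rw [Real.norm_eq_abs, abs_mul, abs_of_pos (Real.exp_pos _), ← Real.exp_add,
      show -(x*u) + -u*t^2 = -((t^2+x)*u) by ring]
    calc |Real.cos (b*t)| * Real.exp (-((t^2+x)*u)) ≤ 1 * Real.exp (-((t^2+x)*u)) :=
        mul_le_mul_of_nonneg_right (Real.abs_cos_le_one _) (Real.exp_pos _).le
      _ = _ := one_mul _
  have hFcont : Continuous F := by
    apply Continuous.mul
    · exact Real.continuous_cos.comp (continuous_const.mul continuous_snd)
    · exact Real.continuous_exp.comp
        (((continuous_snd.pow 2).add continuous_const).mul continuous_fst).neg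
  have hFmeas : AEStronglyMeasurable F (μ.prod μ) := hFcont.aestronglyMeasurable
  -- integrability in t for fixed u > 0
  have hslice : ∀ u : ℝ, 0 < u → Integrable (fun t => F (u, t)) μ := by
    intro u hu
    have hdom : Integrable (fun t : ℝ => Real.exp (-(x * u)) * Real.exp (-u * t ^ 2)) μ :=
      (((integrable_exp_neg_mul_sq hu).const_mul _).restrict)
    refine hdom.mono' ?_ ?_
    · exact (hFcont.comp (Continuous.prodMk_right u)).aestronglyMeasurable
    · filter_upwards with t
      exact hFbound u t
  -- product integrability
  have hprod : Integrable (Function.uncurry (fun u t => F (u, t))) (μ.prod μ) := by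
    rw [show Function.uncurry (fun u t => F (u, t)) = F from rfl]
    refine (integrable_prod_iff hFmeas).2 ⟨?_, ?_⟩
    · rw [hμ, ae_restrict_iff' measurableSet_Ioi]
      filter_upwards with u hu
      exact hslice u hu
    · -- integrable marginal of norms
      have hG : IntegrableOn
          (fun u : ℝ => Real.exp (-(x * u)) * (Real.sqrt (π / u) / 2)) (Ioi 0) := by
        have h2 : IntegrableOn (fun u : ℝ => Real.sqrt π / 2 * (u ^ (-(1:ℝ)/2) * Real.exp (-x * u))) (Ioi 0) := (integrable_rpow_exp x hx).const_mul _
        refine h2.congr_fun (fun u hu => ?_) measurableSet_Ioi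
        have hu0 : (0:ℝ) < u := hu
        beta_reduce
        rw [Real.sqrt_div pi_pos.le, show u ^ (-(1:ℝ)/2) = (Real.sqrt u)⁻¹ by
          rw [show (-(1:ℝ)/2) = -(1/2:ℝ) by norm_num, Real.rpow_neg hu0.le,
            ← Real.sqrt_eq_rpow], show -(x*u) = -x*u by ring]
        ring
      refine hG.mono' ?_ ?_
      · exact (hFmeas.norm.integral_prod_right')
      · rw [hμ, ae_restrict_iff' measurableSet_Ioi]
        filter_upwards with u hu
        have hu0 : (0:ℝ) < u := hu
        rw [Real.norm_eq_abs, abs_of_nonneg (integral_nonneg (fun t => norm_nonneg _))]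
        have hgauss : ∫ t in Ioi (0:ℝ), Real.exp (-(x*u)) * Real.exp (-u * t ^ 2)
            = Real.exp (-(x*u)) * (Real.sqrt (π / u) / 2) := by
          rw [integral_const_mul, integral_gaussian_Ioi]
        rw [← hgauss]
        refine integral_mono (hslice u hu0).norm ?_ ?_
        · exact ((integrable_exp_neg_mul_sq hu0).const_mul _).restrict
        · intro t
          exact hFbound u t
  -- Fubini
  have hswap := integral_integral_swap hprod
  -- evaluate both sides
  have hLHS : (∫ t, ∫ u, F (u, t) ∂μ ∂μ) = ∫ t in Ioi (0:ℝ), Real.cos (b * t) / (t ^ 2 + x) := by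
    refine integral_congr_ae (Filter.Eventually.of_forall (fun t => ?_))
    simp only [hF]
    rw [hμ, integral_const_mul, exp_inner _ (hx2 t), div_eq_mul_inv]
  have hRHS : (∫ u, ∫ t, F (u, t) ∂μ ∂μ)
      = π / (2 * Real.sqrt x) * Real.exp (-b * Real.sqrt x) := by
    have hstep : ∀ u ∈ Ioi (0:ℝ), (∫ t, F (u, t) ∂μ)
        = Real.sqrt π / 2 * (u ^ (-(1:ℝ)/2) * Real.exp (-x * u - (b/2) ^ 2 / u)) := by
      intro u hu
      have hu0 : (0:ℝ) < u := hu
      have : (∫ t, F (u, t) ∂μ)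
          = Real.exp (-(x*u)) * ∫ t in Ioi (0:ℝ), Real.cos (b * t) * Real.exp (-u * t ^ 2) := by
        rw [hμ, ← integral_const_mul]
        refine integral_congr_ae (Filter.Eventually.of_forall (fun t => ?_))
        simp only [hF]
        rw [← mul_assoc, mul_comm (Real.exp _) (Real.cos _), mul_assoc, ← Real.exp_add,
          show -(x*u) + -u * t^2 = -((t^2+x)*u) by ring]
      rw [this, gauss_cos_Ioi u b hu0]
      rw [Real.sqrt_div pi_pos.le, show u ^ (-(1:ℝ)/2) = (Real.sqrt u)⁻¹ by
        rw [show (-(1:ℝ)/2) = -(1/2:ℝ) by norm_num, Real.rpow_neg hu0.le, ← Real.sqrt_eq_rpow],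
        show -x * u - (b/2)^2/u = -(x*u) + -b^2/(4*u) by field_simp; ring, Real.exp_add]
      ring
    rw [hμ, setIntegral_congr_fun measurableSet_Ioi hstep, integral_const_mul,
      bessel x (b/2) hx (by positivity)]
    rw [Real.sqrt_div pi_pos.le, show -2 * (b/2) = -b by ring]
    rw [show Real.sqrt π / 2 * (Real.sqrt π / Real.sqrt x * Real.exp (-b * Real.sqrt x))
        = (Real.sqrt π * Real.sqrt π) / (2 * Real.sqrt x) * Real.exp (-b * Real.sqrt x) by ring,
      Real.mul_self_sqrt pi_pos.le]
  rw [← hLHS, ← hswap, hRHS]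

lemma inv_sq_add_int (x : ℝ) (hx : 0 < x) :
    ∫ t in Ioi (0:ℝ), ((t ^ 2 + x)⁻¹) = π / (2 * Real.sqrt x) := by
  have hsx : (0:ℝ) < Real.sqrt x := Real.sqrt_pos.2 hx
  have h := integral_comp_mul_left_Ioi (fun t => (t ^ 2 + x)⁻¹) 0 hsx
  rw [mul_zero] at h
  have hlhs : ∫ s in Ioi (0:ℝ), ((Real.sqrt x * s) ^ 2 + x)⁻¹ = x⁻¹ * (π / 2) := by
    have : ∀ s : ℝ, ((Real.sqrt x * s) ^ 2 + x)⁻¹ = x⁻¹ * ((1 + s ^ 2)⁻¹) := by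
      intro s
      rw [mul_pow, Real.sq_sqrt hx.le, ← mul_inv]
      congr 1
      ring
    rw [integral_congr_ae (Filter.Eventually.of_forall this), integral_const_mul,
      integral_Ioi_inv_one_add_sq, Real.arctan_zero, sub_zero]
  rw [hlhs] at h
  have := congrArg (fun r => Real.sqrt x * r) h
  simp only [smul_eq_mul, ← mul_assoc, mul_inv_cancel₀ hsx.ne', one_mul] at this
  rw [← this]
  have h2 : Real.sqrt x * Real.sqrt x = x := Real.mul_self_sqrt hx.le
  rw [eq_div_iff (by positivity : (2:ℝ) * Real.sqrt x ≠ 0)]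
  field_simp
  nlinarith [h2, Real.pi_pos, Real.sq_sqrt hx.le]

lemma integrable_inv_sq_add (x : ℝ) (hx : 0 < x) :
    IntegrableOn (fun t : ℝ => (t ^ 2 + x)⁻¹) (Ioi 0) := by
  have hsx : (0:ℝ) < Real.sqrt x := Real.sqrt_pos.2 hx
  have h1 : IntegrableOn (fun s : ℝ => ((Real.sqrt x * s) ^ 2 + x)⁻¹) (Ioi 0) := by
    have h2 : IntegrableOn (fun s : ℝ => x⁻¹ * ((1 + s ^ 2)⁻¹)) (Ioi 0) :=
      (integrable_inv_one_add_sq.restrict.const_mul _)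
    refine h2.congr_fun (fun s _ => ?_) measurableSet_Ioi
    beta_reduce
    rw [mul_pow, Real.sq_sqrt hx.le, ← mul_inv]
    congr 1
    ring
  have := (integrableOn_Ioi_comp_mul_left_iff (fun t : ℝ => (t ^ 2 + x)⁻¹) 0 hsx).1 h1
  rwa [mul_zero] at this

/-- Stieltjes transform of `ζ^{-1/2} sin²(a √ζ)`:
`∫₀^∞ ζ^{-1/2} sin²(a √ζ)/(ζ+x) dζ = (π/(2√x))(1 − e^{-2a√x})`. -/
theorem stmt_6 (a x : ℝ) (ha : 0 < a) (hx : 0 < x) :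
    (∫ ζ in Ioi (0 : ℝ), ζ ^ (-(1 : ℝ) / 2) * Real.sin (a * Real.sqrt ζ) ^ 2 / (ζ + x))
      = π / (2 * Real.sqrt x) * (1 - Real.exp (-2 * a * Real.sqrt x)) := by
  have hsub := integral_comp_rpow_Ioi_of_pos
    (g := fun ζ : ℝ => ζ ^ (-(1:ℝ)/2) * Real.sin (a * Real.sqrt ζ) ^ 2 / (ζ + x))
    (p := 2) (by norm_num)
  rw [← hsub]
  have hpt : ∀ t ∈ Ioi (0:ℝ), (2 * t ^ ((2:ℝ) - 1)) • ((t ^ (2:ℝ)) ^ (-(1:ℝ)/2)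
        * Real.sin (a * Real.sqrt (t ^ (2:ℝ))) ^ 2 / (t ^ (2:ℝ) + x))
      = (t ^ 2 + x)⁻¹ - Real.cos (2 * a * t) * (t ^ 2 + x)⁻¹ := by
    intro t ht
    have ht0 : (0:ℝ) < t := ht
    have h2 : t ^ ((2:ℝ)) = t ^ 2 := by
      rw [show ((2:ℝ)) = ((2:ℕ):ℝ) by norm_num, Real.rpow_natCast]
    have h1 : t ^ ((2:ℝ) - 1) = t := by norm_num
    have h3 : ((t ^ 2 : ℝ)) ^ (-(1:ℝ)/2) = t⁻¹ := by
      rw [← Real.rpow_natCast t 2, ← Real.rpow_mul ht0.le]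
      norm_num
      exact Real.rpow_neg_one t
    rw [h2, h1, h3, Real.sqrt_sq ht0.le, smul_eq_mul]
    have hsq : Real.sin (a * t) ^ 2 = 1 / 2 - Real.cos (2 * (a * t)) / 2 :=
      Real.sin_sq_eq_half_sub (a * t)
    rw [hsq, show (2 : ℝ) * (a * t) = 2 * a * t by ring]
    have hd : (0:ℝ) < t ^ 2 + x := by positivity
    field_simp
  rw [setIntegral_congr_fun measurableSet_Ioi hpt]
  have hI1 := integrable_inv_sq_add x hx
  have hI2 : IntegrableOn (fun t : ℝ => Real.cos (2 * a * t) * (t ^ 2 + x)⁻¹) (Ioi 0) := by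
    refine hI1.mono' ?_ ?_
    · refine Continuous.aestronglyMeasurable ?_
      exact (Real.continuous_cos.comp (continuous_const.mul continuous_id)).mul
        (((continuous_id.pow 2).add continuous_const).inv₀ (fun t => (show (0:ℝ) < t ^ 2 + x by positivity).ne'))
    · filter_upwards with t
      rw [Real.norm_eq_abs, abs_mul, abs_of_nonneg (by positivity : (0:ℝ) ≤ (t^2+x)⁻¹)]
      calc |Real.cos (2*a*t)| * (t^2+x)⁻¹ ≤ 1 * (t^2+x)⁻¹ :=
          mul_le_mul_of_nonneg_right (Real.abs_cos_le_one _) (by positivity)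
        _ = _ := one_mul _
  rw [integral_sub hI1 hI2, inv_sq_add_int x hx]
  have hlap : ∫ t in Ioi (0:ℝ), Real.cos (2 * a * t) * (t ^ 2 + x)⁻¹
      = π / (2 * Real.sqrt x) * Real.exp (-(2*a) * Real.sqrt x) := by
    rw [← laplace_cos x (2*a) hx (by positivity)]
    refine setIntegral_congr_fun measurableSet_Ioi (fun t _ => ?_)
    rw [div_eq_mul_inv]
  rw [hlap, show (-(2*a) : ℝ) = -2*a by ring]
  ring
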